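/- For every m ∈ ℕ, let V be the number of 3-element subsets of the vertex set of Θ'_m, let E be the number of pairs (e, S) where e is an edge of Θ'_m and S is a 2-element set of vertices each disjoint from e, and let F be the number of pairs (P, v) where P is an unordered pair of disjoint edges of Θ'_m and v is a vertex disjoint from both edges of P. Then 6·(V − E + F) = m·(m−2)·(m−7) as integers. (These are the cell counts of the cube complex Conf^□_3(Θ'_m), so this computes its Euler characteristic χ = m(m−2)(m−7)/6.) -/
import Mathlib


/-- The once-subdivided generalized theta graph `Θ'_m`: vertices `{a₁,a₂} ⊕ Fin m`,
with edges exactly `{aⱼ, bᵢ}`, i.e. the complete bipartite graph `K_{2,m}`. -/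
def thetaSub (m : ℕ) : SimpleGraph (Fin 2 ⊕ Fin m) :=
  completeBipartiteGraph (Fin 2) (Fin m)

/-- Number of 0-cells of `Conf^□₃(Θ'_m)`: 3-element subsets of the vertex set. -/
noncomputable def vertCount (m : ℕ) : ℕ :=
  Nat.card {s : Finset (Fin 2 ⊕ Fin m) // s.card = 3}

/-- Number of 1-cells of `Conf^□₃(Θ'_m)`: pairs of an edge together with a 2-element
set of vertices disjoint from it. -/
noncomputable def edgeCount (m : ℕ) : ℕ :=
  Nat.card {p : Sym2 (Fin 2 ⊕ Fin m) × Finset (Fin 2 ⊕ Fin m) //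
    p.1 ∈ (thetaSub m).edgeSet ∧ p.2.card = 2 ∧ ∀ v ∈ p.2, v ∉ p.1}

/-- Number of 2-cells of `Conf^□₃(Θ'_m)`: pairs of an unordered pair of disjoint
edges together with a vertex disjoint from both. -/
noncomputable def faceCount (m : ℕ) : ℕ :=
  Nat.card {p : Finset (Sym2 (Fin 2 ⊕ Fin m)) × (Fin 2 ⊕ Fin m) //
    p.1.card = 2 ∧ (∀ e ∈ p.1, e ∈ (thetaSub m).edgeSet) ∧
    (∀ e ∈ p.1, ∀ e' ∈ p.1, e ≠ e' → ∀ w, w ∈ e → w ∉ e') ∧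
    (∀ e ∈ p.1, p.2 ∉ e)}


section AuxLemmas

open Finset

lemma card_subtype_subset' {α : Type*} [Fintype α] [DecidableEq α] (t : Finset α) (k : ℕ) :
    Nat.card {S : Finset α // S.card = k ∧ S ⊆ t} = t.card.choose k := by
  rw [Nat.card_eq_fintype_card, Fintype.card_subtype]
  rw [show Finset.univ.filter (fun S => S.card = k ∧ S ⊆ t) = t.powersetCard k by
    ext S; simp [Finset.mem_powersetCard, and_comm]]
  exact Finset.card_powersetCard k t

lemma edge_char' {m : ℕ} {e : Sym2 (Fin 2 ⊕ Fin m)} (he : e ∈ (thetaSub m).edgeSet) :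
    ∃ j i, e = s(Sum.inl j, Sum.inr i) := by
  induction e using Sym2.ind with
  | _ a b =>
    rw [SimpleGraph.mem_edgeSet] at he
    rcases a with j | i <;> rcases b with j' | i'
    · simp [thetaSub] at he
    · exact ⟨j, i', rfl⟩
    · exact ⟨j', i, Sym2.eq_swap⟩
    · simp [thetaSub] at he

lemma vertCount_eq (m : ℕ) : vertCount m = (m + 2).choose 3 := by
  rw [vertCount,
    Nat.card_congr (Equiv.subtypeEquivRight (q := fun S : Finset (Fin 2 ⊕ Fin m) =>
      S.card = 3 ∧ S ⊆ Finset.univ) (fun S => by simp)), card_subtype_subset']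
  simp [add_comm]

lemma edgeCount_eq (m : ℕ) : edgeCount m = 2 * m * m.choose 2 := by
  classical
  rw [edgeCount]
  have hb : Function.Bijective
      (fun q : (Σ x : Fin 2 × Fin m, {S : Finset (Fin 2 ⊕ Fin m) // S.card = 2 ∧
          S ⊆ Finset.univ \ {Sum.inl x.1, Sum.inr x.2}}) =>
        (⟨(s(Sum.inl q.1.1, Sum.inr q.1.2), q.2.1), by
          refine ⟨by simp [thetaSub], q.2.2.1, fun v hv => ?_⟩
          have := q.2.2.2 hv
          simp only [Finset.mem_sdiff, Finset.mem_insert, Finset.mem_singleton] at this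
          simp only [Sym2.mem_iff]
          tauto⟩ :
        {p : Sym2 (Fin 2 ⊕ Fin m) × Finset (Fin 2 ⊕ Fin m) //
          p.1 ∈ (thetaSub m).edgeSet ∧ p.2.card = 2 ∧ ∀ v ∈ p.2, v ∉ p.1})) := by
    constructor
    · rintro ⟨⟨j, i⟩, S, hS⟩ ⟨⟨j', i'⟩, S', hS'⟩ h
      simp only [Subtype.mk.injEq, Prod.mk.injEq, Sym2.eq, Sym2.rel_iff',
        Prod.mk.injEq, Prod.swap_prod_mk] at h
      obtain ⟨h1, h2⟩ := h
      rcases h1 with ⟨ha, hb⟩ | ⟨ha, hb⟩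
      · cases Sum.inl.inj ha; cases Sum.inr.inj hb; cases h2; rfl
      · exact absurd ha (by simp)
    · rintro ⟨⟨e, S⟩, he, hc, hd⟩
      obtain ⟨j, i, rfl⟩ := edge_char' he
      refine ⟨⟨(j, i), S, hc, fun v hv => ?_⟩, rfl⟩
      have := hd v hv
      simp only [Sym2.mem_iff] at this
      simp only [Finset.mem_sdiff, Finset.mem_insert, Finset.mem_singleton, Finset.mem_univ,
        true_and]
      tauto
  rw [← Nat.card_eq_of_bijective _ hb, Nat.card_eq_fintype_card, Fintype.card_sigma]
  simp only [← Nat.card_eq_fintype_card]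
  have hfib : ∀ x : Fin 2 × Fin m,
      Nat.card {S : Finset (Fin 2 ⊕ Fin m) // S.card = 2 ∧
        S ⊆ Finset.univ \ {Sum.inl x.1, Sum.inr x.2}} = m.choose 2 := by
    intro x
    rw [card_subtype_subset']
    congr 1
    rw [Finset.card_sdiff_of_subset (Finset.subset_univ _)]
    simp
  simp only [hfib, Finset.sum_const, Finset.card_univ, smul_eq_mul]
  simp [Fintype.card_prod, mul_assoc]

lemma faceCount_eq (m : ℕ) : faceCount m = (m * m - m) * (m - 2) := by
  classical
  rw [faceCount]
  have hb : Function.Bijective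
      (fun q : (Σ x : {q : Fin m × Fin m // q.1 ≠ q.2},
          {v : Fin 2 ⊕ Fin m // v ∉ ({Sum.inl 0, Sum.inl 1, Sum.inr x.1.1, Sum.inr x.1.2} :
            Finset (Fin 2 ⊕ Fin m))}) =>
        (⟨(({s(Sum.inl 0, Sum.inr q.1.1.1), s(Sum.inl 1, Sum.inr q.1.1.2)} :
            Finset (Sym2 (Fin 2 ⊕ Fin m))), q.2.1), by
          obtain ⟨⟨⟨i, i'⟩, hii⟩, v, hv⟩ := q
          simp only [Finset.mem_insert, Finset.mem_singleton, ne_eq] at hv ⊢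
          push_neg at hv
          obtain ⟨hv0, hv1, hv2, hv3⟩ := hv
          refine ⟨?_, ?_, ?_, ?_⟩
          · rw [Finset.card_pair]
            simp [Sym2.eq, Sym2.rel_iff']
          · rintro e (rfl | rfl) <;> simp [thetaSub]
          · rintro e (rfl | rfl) e' (rfl | rfl) hne w hw hw'
            · exact hne rfl
            · simp only [Sym2.mem_iff] at hw hw'
              rcases hw with rfl | rfl <;> simp_all
            · simp only [Sym2.mem_iff] at hw hw'
              rcases hw with rfl | rfl <;> simp_all
            · exact hne rfl
          · rintro e (rfl | rfl) <;> simp only [Sym2.mem_iff] <;> tauto⟩ :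
        {p : Finset (Sym2 (Fin 2 ⊕ Fin m)) × (Fin 2 ⊕ Fin m) //
          p.1.card = 2 ∧ (∀ e ∈ p.1, e ∈ (thetaSub m).edgeSet) ∧
          (∀ e ∈ p.1, ∀ e' ∈ p.1, e ≠ e' → ∀ w, w ∈ e → w ∉ e') ∧
          (∀ e ∈ p.1, p.2 ∉ e)})) := by
    constructor
    · rintro ⟨⟨⟨i1, i2⟩, hi⟩, v, hv⟩ ⟨⟨⟨k1, k2⟩, hk⟩, w, hw⟩ h
      simp only [Subtype.mk.injEq, Prod.mk.injEq] at h
      obtain ⟨h1, h2⟩ := h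
      have m1 : s(Sum.inl (0 : Fin 2), Sum.inr i1) ∈
          ({s(Sum.inl 0, Sum.inr k1), s(Sum.inl 1, Sum.inr k2)} :
            Finset (Sym2 (Fin 2 ⊕ Fin m))) := by
        rw [← h1]; exact Finset.mem_insert_self _ _
      have m2 : s(Sum.inl (1 : Fin 2), Sum.inr i2) ∈
          ({s(Sum.inl 0, Sum.inr k1), s(Sum.inl 1, Sum.inr k2)} :
            Finset (Sym2 (Fin 2 ⊕ Fin m))) := by
        rw [← h1]; exact Finset.mem_insert_of_mem (Finset.mem_singleton_self _)
      simp only [Finset.mem_insert, Finset.mem_singleton, Sym2.eq, Sym2.rel_iff',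
        Prod.mk.injEq, Prod.swap_prod_mk] at m1 m2
      have e1 : i1 = k1 := by
        rcases m1 with (⟨ha, hb⟩ | ⟨ha, hb⟩) | (⟨ha, hb⟩ | ⟨ha, hb⟩) <;> simp_all
      have e2 : i2 = k2 := by
        rcases m2 with (⟨ha, hb⟩ | ⟨ha, hb⟩) | (⟨ha, hb⟩ | ⟨ha, hb⟩) <;> simp_all
      subst e1; subst e2; cases h2; rfl
    · rintro ⟨⟨P, v⟩, hcard, hedge, hdisj, hv⟩
      obtain ⟨e, e', hne, rfl⟩ := Finset.card_eq_two.mp hcard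
      obtain ⟨j, i, rfl⟩ := edge_char' (hedge _ (Finset.mem_insert_self _ _))
      obtain ⟨j', i', rfl⟩ := edge_char' (hedge _ (Finset.mem_insert_of_mem
        (Finset.mem_singleton_self _)))
      have hjj : j ≠ j' := by
        rintro rfl
        exact hdisj _ (Finset.mem_insert_self _ _) _
          (Finset.mem_insert_of_mem (Finset.mem_singleton_self _)) hne (Sum.inl j)
          (Sym2.mem_mk_left _ _) (Sym2.mem_mk_left _ _)
      have hii : i ≠ i' := by
        rintro rfl
        exact hdisj _ (Finset.mem_insert_self _ _) _
          (Finset.mem_insert_of_mem (Finset.mem_singleton_self _)) hne (Sum.inr i)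
          (Sym2.mem_mk_right _ _) (Sym2.mem_mk_right _ _)
      have hv1 := hv _ (Finset.mem_insert_self _ _)
      have hv2 := hv _ (Finset.mem_insert_of_mem (Finset.mem_singleton_self _))
      simp only [Sym2.mem_iff] at hv1 hv2
      push_neg at hv1 hv2
      fin_cases j <;> fin_cases j'
      · exact absurd rfl hjj
      · exact ⟨⟨⟨⟨i, i'⟩, hii⟩, v, by
          simp only [Finset.mem_insert, Finset.mem_singleton]
          push_neg
          exact ⟨hv1.1, hv2.1, hv1.2, hv2.2⟩⟩, rfl⟩
      · refine ⟨⟨⟨⟨i', i⟩, hii.symm⟩, v, by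
          simp only [Finset.mem_insert, Finset.mem_singleton]
          push_neg
          exact ⟨hv2.1, hv1.1, hv2.2, hv1.2⟩⟩, ?_⟩
        simp only [Subtype.mk.injEq, Prod.mk.injEq]
        exact ⟨Finset.pair_comm _ _, trivial⟩
      · exact absurd rfl hjj
  rw [← Nat.card_eq_of_bijective _ hb, Nat.card_eq_fintype_card, Fintype.card_sigma]
  simp only [← Nat.card_eq_fintype_card]
  have hfib : ∀ x : {q : Fin m × Fin m // q.1 ≠ q.2},
      Nat.card {v : Fin 2 ⊕ Fin m // v ∉ ({Sum.inl 0, Sum.inl 1, Sum.inr x.1.1, Sum.inr x.1.2} :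
        Finset (Fin 2 ⊕ Fin m))} = m - 2 := by
    rintro ⟨⟨i, i'⟩, hii⟩
    rw [Nat.card_eq_fintype_card, Fintype.card_subtype]
    rw [show Finset.univ.filter (fun v : Fin 2 ⊕ Fin m =>
        v ∉ ({Sum.inl 0, Sum.inl 1, Sum.inr i, Sum.inr i'} : Finset (Fin 2 ⊕ Fin m))) =
        Finset.univ \ {Sum.inl 0, Sum.inl 1, Sum.inr i, Sum.inr i'} by
      ext v; simp]
    rw [Finset.card_sdiff_of_subset (Finset.subset_univ _)]
    have h4 : ({Sum.inl 0, Sum.inl 1, Sum.inr i, Sum.inr i'} :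
        Finset (Fin 2 ⊕ Fin m)).card = 4 := by
      rw [Finset.card_insert_of_notMem (by simp [hii]),
        Finset.card_insert_of_notMem (by simp),
        Finset.card_insert_of_notMem (by simp [hii]), Finset.card_singleton]
    rw [h4, Finset.card_univ]
    have : Fintype.card (Fin 2 ⊕ Fin m) = m + 2 := by simp [add_comm]
    omega
  simp only [hfib, Finset.sum_const, Finset.card_univ, smul_eq_mul]
  congr 1
  rw [Fintype.card_subtype]
  rw [show (Finset.univ.filter fun q : Fin m × Fin m => q.1 ≠ q.2) =
      Finset.univ \ (Finset.univ.filter fun q : Fin m × Fin m => q.1 = q.2) by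
    ext q; simp]
  rw [Finset.card_sdiff_of_subset (Finset.filter_subset _ _)]
  have : (Finset.univ.filter fun q : Fin m × Fin m => q.1 = q.2).card = m := by
    rw [show (Finset.univ.filter fun q : Fin m × Fin m => q.1 = q.2) =
        Finset.univ.image (fun i : Fin m => (i, i)) by
      ext ⟨a, b⟩; simp [eq_comm]]
    rw [Finset.card_image_of_injective _ (fun a b h => (Prod.mk.injEq _ _ _ _ ▸ h).1)]
    simp
  rw [this]
  simp [Finset.card_univ]

lemma two_mul_choose_two_succ (k : ℕ) : 2 * (k + 1).choose 2 = (k + 1) * k := by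
  induction k with
  | zero => rfl
  | succ n ih =>
    rw [show n + 1 + 1 = (n + 1) + 1 from rfl, Nat.choose_succ_succ, Nat.mul_add, ih,
      Nat.choose_one_right]
    ring

lemma six_mul_choose_three (n : ℕ) : 6 * (n + 2).choose 3 = (n + 2) * (n + 1) * n := by
  induction n with
  | zero => rfl
  | succ k ih =>
    rw [show k + 1 + 2 = (k + 2) + 1 from rfl, Nat.choose_succ_succ, Nat.mul_add, ih,
      show (k + 2).choose 2 = (k + 1 + 1).choose 2 from rfl]
    have h := two_mul_choose_two_succ (k + 1)
    nlinarith [h]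

end AuxLemmas

/-- The Euler characteristic of `Conf^□₃(Θ'_m)` is `m(m-2)(m-7)/6`. -/
theorem euler_char_conf3_theta (m : ℕ) :
    (6 : ℤ) * ((vertCount m : ℤ) - (edgeCount m : ℤ) + (faceCount m : ℤ)) =
      (m : ℤ) * ((m : ℤ) - 2) * ((m : ℤ) - 7) := by
  rw [vertCount_eq, edgeCount_eq, faceCount_eq]
  match m with
  | 0 => decide
  | 1 => decide
  | (n + 2) =>
    rw [show (n + 2) * (n + 2) - (n + 2) = (n + 2) * (n + 1) by
        rw [show (n + 2) * (n + 2) = (n + 2) * (n + 1) + (n + 2) by ring]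
        omega,
      show n + 2 - 2 = n by omega]
    have h3 : (6 : ℤ) * ((n + 2 + 2).choose 3 : ℕ) = ((n + 4) * (n + 3) * (n + 2) : ℕ) := by
      exact_mod_cast congrArg (Nat.cast : ℕ → ℤ) (six_mul_choose_three (n + 2))
    have h2 : (2 : ℤ) * ((n + 2).choose 2 : ℕ) = ((n + 2) * (n + 1) : ℕ) := by
      exact_mod_cast congrArg (Nat.cast : ℕ → ℤ) (two_mul_choose_two_succ (n + 1))
    push_cast at h3 h2 ⊢
    linear_combination h3 - 6 * ((n : ℤ) + 2) * h2
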